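/- Let f be a non-negative multiplicative function and x ≥ 2. Then the identity ∑_{n≤x} f(n) log x = ∑_{n≤x} f(n) log n + ∑_{n≤x} f(n) log(x/n) holds, and moreover ∑_{n≤x} f(n) log n = ∑_{m≤x} f(m) ∑_{p^ν ≤ x/m, p∤m} f(p^ν) log(p^ν), where the inner sum is over prime powers p^ν with p not dividing m. -/

import Mathlib

open Finset Real

theorem log_weight_identities (f : ℕ → ℝ) (hf1 : f 1 = 1)
    (hmul : ∀ m n : ℕ, Nat.Coprime m n → f (m * n) = f m * f n)
    (hnonneg : ∀ n, 0 ≤ f n) (x : ℝ) (hx : 2 ≤ x) :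
    (∑ n ∈ Finset.Icc 1 ⌊x⌋₊, f n * Real.log x
      = (∑ n ∈ Finset.Icc 1 ⌊x⌋₊, f n * Real.log n)
        + ∑ n ∈ Finset.Icc 1 ⌊x⌋₊, f n * Real.log (x / n)) ∧
    (∑ n ∈ Finset.Icc 1 ⌊x⌋₊, f n * Real.log n
      = ∑ m ∈ Finset.Icc 1 ⌊x⌋₊, f m *
          ∑ p ∈ Finset.Icc 1 ⌊x⌋₊, ∑ ν ∈ Finset.Icc 1 ⌊x⌋₊,
            if p.Prime ∧ ¬ p ∣ m ∧ ((p : ℝ) ^ ν * m ≤ x) then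
              f (p ^ ν) * Real.log ((p : ℝ) ^ ν) else 0) := by
  have hx0 : (0:ℝ) < x := by linarith
  set N := ⌊x⌋₊ with hN
  have hN2 : 2 ≤ N := by
    rw [hN]
    exact Nat.le_floor (by exact_mod_cast hx)
  constructor
  · rw [← Finset.sum_add_distrib]
    refine Finset.sum_congr rfl fun n hn => ?_
    have hn1 : 1 ≤ n := (Finset.mem_Icc.mp hn).1
    have hn0 : (n:ℝ) ≠ 0 := Nat.cast_ne_zero.mpr (by omega)
    rw [Real.log_div (ne_of_gt hx0) hn0]
    ring
  · -- rewrite RHS with the scalar pushed inside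
    have hRHS : ∑ m ∈ Finset.Icc 1 N, f m *
          ∑ p ∈ Finset.Icc 1 N, ∑ ν ∈ Finset.Icc 1 N,
            (if p.Prime ∧ ¬ p ∣ m ∧ ((p : ℝ) ^ ν * m ≤ x) then
              f (p ^ ν) * Real.log ((p : ℝ) ^ ν) else 0)
        = ∑ t ∈ ((Finset.Icc 1 N) ×ˢ ((Finset.Icc 1 N) ×ˢ (Finset.Icc 1 N))).filter
            (fun t => t.2.1.Prime ∧ ¬ t.2.1 ∣ t.1 ∧ ((t.2.1 : ℝ) ^ t.2.2 * t.1 ≤ x)),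
            f t.1 * (f (t.2.1 ^ t.2.2) * Real.log ((t.2.1 : ℝ) ^ t.2.2)) := by
      rw [Finset.sum_filter, Finset.sum_product]
      refine Finset.sum_congr rfl fun m _ => ?_
      rw [Finset.sum_product, Finset.mul_sum]
      refine Finset.sum_congr rfl fun p _ => ?_
      rw [Finset.mul_sum]
      refine Finset.sum_congr rfl fun ν _ => ?_
      simp only [mul_ite, mul_zero]
    rw [hRHS]
    -- rewrite LHS over pairs (n, prime p ∣ n)
    have hLHS : ∑ n ∈ Finset.Icc 1 N, f n * Real.log n
        = ∑ t ∈ (Finset.Icc 1 N).sigma (fun n => n.primeFactors),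
            f (t.1 / t.2 ^ t.1.factorization t.2) *
              (f (t.2 ^ t.1.factorization t.2) *
                Real.log ((t.2 : ℝ) ^ t.1.factorization t.2)) := by
      rw [Finset.sum_sigma]
      refine Finset.sum_congr rfl fun n hn => ?_
      have hn1 : 1 ≤ n := (Finset.mem_Icc.mp hn).1
      have hn0 : n ≠ 0 := by omega
      have hprod : ∏ p ∈ n.primeFactors, p ^ n.factorization p = n := by
        rw [← Nat.support_factorization]
        exact Nat.factorization_prod_pow_eq_self hn0
      have hlog : Real.log n = ∑ p ∈ n.primeFactors,
          Real.log ((p : ℝ) ^ n.factorization p) := by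
        conv_lhs => rw [← hprod]
        push_cast
        rw [Real.log_prod]
        intro p hp
        have hp' : p.Prime := Nat.prime_of_mem_primeFactors hp
        exact pow_ne_zero _ (Nat.cast_ne_zero.mpr hp'.ne_zero)
      rw [hlog, Finset.mul_sum]
      refine Finset.sum_congr rfl fun p hp => ?_
      have hp' : p.Prime := Nat.prime_of_mem_primeFactors hp
      have hfn : f n = f (p ^ n.factorization p) * f (n / p ^ n.factorization p) := by
        conv_lhs => rw [← Nat.ordProj_mul_ordCompl_eq_self n p]
        exact hmul _ _ ((Nat.coprime_ordCompl hp' hn0).pow_left _)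
      rw [hfn]; ring
    rw [hLHS]
    -- bijection
    refine Finset.sum_nbij' (fun t => (t.1 / t.2 ^ t.1.factorization t.2,
        t.2, t.1.factorization t.2)) (fun t => ⟨t.1 * t.2.1 ^ t.2.2, t.2.1⟩) ?_ ?_ ?_ ?_ ?_
    · rintro ⟨n, p⟩ ht
      simp only [Finset.mem_sigma, Finset.mem_Icc] at ht
      obtain ⟨⟨hn1, hnN⟩, hp⟩ := ht
      have hn0 : n ≠ 0 := by omega
      have hp' : p.Prime := Nat.prime_of_mem_primeFactors hp
      have hpdvd : p ∣ n := Nat.dvd_of_mem_primeFactors hp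
      have hk : 0 < n.factorization p := hp'.factorization_pos_of_dvd hn0 hpdvd
      have hord_dvd : p ^ n.factorization p ∣ n := Nat.ordProj_dvd n p
      have hord_le : p ^ n.factorization p ≤ n := Nat.le_of_dvd (by omega) hord_dvd
      have hm1 : 1 ≤ n / p ^ n.factorization p :=
        Nat.one_le_div_iff (Nat.pos_of_ne_zero (pow_ne_zero _ hp'.ne_zero)) |>.mpr hord_le
      have hmn : n / p ^ n.factorization p ≤ n := Nat.div_le_self _ _
      simp only [Finset.mem_filter, Finset.mem_product, Finset.mem_Icc]
      refine ⟨⟨⟨hm1, le_trans hmn hnN⟩, ⟨hp'.one_lt.le, le_trans (Nat.le_of_dvd (by omega) hpdvd) hnN⟩,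
          ⟨hk, ?_⟩⟩, hp', Nat.not_dvd_ordCompl hp' hn0, ?_⟩
      · calc n.factorization p ≤ 2 ^ n.factorization p := Nat.lt_two_pow_self.le
          _ ≤ p ^ n.factorization p := Nat.pow_le_pow_left hp'.two_le _
          _ ≤ n := hord_le
          _ ≤ N := hnN
      · have : (p:ℝ) ^ n.factorization p * (n / p ^ n.factorization p : ℕ)
            = ((n : ℕ) : ℝ) := by
          rw [← Nat.cast_pow, ← Nat.cast_mul, Nat.ordProj_mul_ordCompl_eq_self]
        rw [this]
        exact le_trans (Nat.cast_le.mpr hnN) (Nat.floor_le hx0.le)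
    · rintro ⟨m, p, ν⟩ ht
      simp only [Finset.mem_filter, Finset.mem_product, Finset.mem_Icc] at ht
      obtain ⟨⟨⟨hm1, hmN⟩, ⟨hp1, hpN⟩, hν1, hνN⟩, hp', hpm, hle⟩ := ht
      have hm0 : m ≠ 0 := by omega
      have hle' : m * p ^ ν ≤ N := by
        rw [hN, Nat.le_floor_iff hx0.le]
        push_cast
        linarith [hle]
      simp only [Finset.mem_sigma, Finset.mem_Icc, Nat.mem_primeFactors]
      refine ⟨⟨Nat.one_le_iff_ne_zero.mpr (by positivity), hle'⟩, hp',
        dvd_mul_of_dvd_right (dvd_pow_self p (by omega)) m, by positivity⟩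
    · rintro ⟨n, p⟩ ht
      simp only [Finset.mem_sigma, Finset.mem_Icc] at ht
      obtain ⟨⟨hn1, hnN⟩, hp⟩ := ht
      have h : n / p ^ n.factorization p * p ^ n.factorization p = n :=
        Nat.div_mul_cancel (Nat.ordProj_dvd n p)
      simp only [h]
    · rintro ⟨m, p, ν⟩ ht
      simp only [Finset.mem_filter, Finset.mem_product, Finset.mem_Icc] at ht
      obtain ⟨⟨⟨hm1, hmN⟩, ⟨hp1, hpN⟩, hν1, hνN⟩, hp', hpm, hle⟩ := ht
      have hm0 : m ≠ 0 := by omega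
      have hfact : (m * p ^ ν).factorization p = ν := by
        rw [Nat.factorization_mul hm0 (pow_ne_zero _ hp'.ne_zero),
          Finsupp.add_apply, Nat.factorization_eq_zero_of_not_dvd hpm,
          hp'.factorization_pow, Finsupp.single_eq_same, zero_add]
      have h : m * p ^ ν / p ^ ν = m := by
        rw [mul_comm]
        exact Nat.mul_div_cancel_left m (Nat.pos_of_ne_zero (pow_ne_zero _ hp'.ne_zero))
      simp only [hfact, h]
    · rintro ⟨n, p⟩ ht
      rfl
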